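/- Let τ_r(α, W) = Wᵀ diag(α) W for α ∈ ℝ^r, W ∈ ℝ^{r×n} with r ≥ n. If (α, W) satisfies rk(Wᵀ diag(α) W) = n, then the differential of τ_r at (α, W) is surjective onto Sym²(ℝ^n); equivalently, the branch locus of τ_r is contained in the set of symmetric matrices of rank at most n−1. -/
import Mathlib

/-- Let `τ_r(α, W) = Wᵀ diag(α) W` with `r ≥ n` and `W` given by its rows
`W i : Fin n → ℝ`. If `rk(Wᵀ diag(α) W) = n`, then the differential of `τ_r` at
`(α, W)`, namely `(α̇, Ẇ) ↦ Wᵀ diag(α̇) W + Ẇᵀ diag(α) W + Wᵀ diag(α) Ẇ`, is surjective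
onto the symmetric matrices `Sym²(ℝ^n)`. -/
theorem stmt17 (n r : ℕ) (hr : n ≤ r) (α : Fin r → ℝ) (W : Fin r → Fin n → ℝ)
    (hrank : (Matrix.of fun a b => ∑ i, α i * W i a * W i b).rank = n) :
    ∀ A : Fin n → Fin n → ℝ, (∀ a b, A a b = A b a) →
      ∃ (da : Fin r → ℝ) (dW : Fin r → Fin n → ℝ), ∀ a b,
        (∑ i, (da i * W i a * W i b
            + α i * (dW i a * W i b + W i a * dW i b))) = A a b := by
  intro A hA
  set M : Matrix (Fin n) (Fin n) ℝ := Matrix.of fun a b => ∑ i, α i * W i a * W i b with hM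
  -- mulVecLin of M is surjective
  have hsurj : Function.Surjective M.mulVecLin := by
    rw [← LinearMap.range_eq_top]
    apply Submodule.eq_top_of_finrank_eq
    have hdef : M.rank = Module.finrank ℝ ↥(LinearMap.range M.mulVecLin) := rfl
    rw [← hdef, hrank]
    simp
  -- pick solutions of M *ᵥ x = column of A
  choose x hx using fun b => hsurj (fun a => A a b)
  refine ⟨0, fun i a => (1/2) * ∑ c, W i c * x a c, fun a b => ?_⟩
  have hMab : ∀ a b, (∑ c, M a c * x b c) = A a b := by
    intro a b
    have := congrFun (hx b) a
    simpa [Matrix.mulVecLin, Matrix.mulVec, dotProduct] using this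
  have key1 : (∑ i, α i * (W i a * ((1/2) * ∑ c, W i c * x b c)))
      = (1/2) * A a b := by
    rw [← hMab a b]
    simp only [Finset.mul_sum]
    rw [Finset.sum_comm]
    congr 1
    ext c
    simp only [hM, Matrix.of_apply, Finset.sum_mul, Finset.mul_sum]
    congr 1; ext i; ring
  have key2 : (∑ i, α i * (((1/2) * ∑ c, W i c * x a c) * W i b))
      = (1/2) * A a b := by
    rw [hA a b, ← hMab b a]
    simp only [Finset.mul_sum, Finset.sum_mul]
    rw [Finset.sum_comm]
    refine Finset.sum_congr rfl fun c _ => ?_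
    simp only [hM, Matrix.of_apply, Finset.sum_mul, Finset.mul_sum]
    refine Finset.sum_congr rfl fun i _ => ?_
    ring
  calc (∑ i, ((0:Fin r → ℝ) i * W i a * W i b
          + α i * (((1/2) * ∑ c, W i c * x a c) * W i b
            + W i a * ((1/2) * ∑ c, W i c * x b c))))
      = (∑ i, α i * (((1/2) * ∑ c, W i c * x a c) * W i b))
        + (∑ i, α i * (W i a * ((1/2) * ∑ c, W i c * x b c))) := by
        rw [← Finset.sum_add_distrib]
        congr 1; ext i; simp; ring
    _ = A a b := by rw [key1, key2]; ring
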